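/- Under the same hypotheses, the derivative I'(h) = √2 ∫_{x₋(h)}^{x₊(h)} dx/√(h − G(x)) satisfies: there exist constants c₁, c₂ > 0 and h₀ > 0 such that for all h ≥ h₀, c₁ h^{−1/2 + 1/(2n+2)} ≤ I'(h) ≤ c₂ h^{−1/2 + 1/(2n+2)}. -/

import Mathlib

open MeasureTheory intervalIntegral

lemma key1 (n : ℕ) {a : ℝ → ℝ} (hcont : Continuous a) {m M : ℝ}
    (hbound : ∀ s : ℝ, m ≤ a s ∧ a s ≤ M) {x y : ℝ} (hx : 0 ≤ x) (hxy : x ≤ y) :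
    m * (y ^ (2*n+2) - x ^ (2*n+2)) / (2*(n:ℝ)+2) ≤ (∫ s in x..y, a s * s ^ (2*n+1)) ∧
    (∫ s in x..y, a s * s ^ (2*n+1)) ≤ M * (y ^ (2*n+2) - x ^ (2*n+2)) / (2*(n:ℝ)+2) := by
  have hint : IntervalIntegrable (fun s => a s * s ^ (2*n+1)) volume x y :=
    (hcont.mul (continuous_pow _)).intervalIntegrable x y
  have hm_int : IntervalIntegrable (fun s : ℝ => m * s ^ (2*n+1)) volume x y :=
    (continuous_const.mul (continuous_pow _)).intervalIntegrable x y
  have hM_int : IntervalIntegrable (fun s : ℝ => M * s ^ (2*n+1)) volume x y :=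
    (continuous_const.mul (continuous_pow _)).intervalIntegrable x y
  have e1 : ∀ c : ℝ, (∫ s in x..y, c * s ^ (2*n+1)) = c * (y ^ (2*n+2) - x ^ (2*n+2)) / (2*(n:ℝ)+2) := by
    intro c
    rw [intervalIntegral.integral_const_mul, integral_pow]
    have h2 : 2*n+1+1 = 2*n+2 := rfl
    rw [h2]
    push_cast
    ring
  constructor
  · rw [← e1 m]
    refine intervalIntegral.integral_mono_on hxy hm_int hint (fun s hs => ?_)
    exact mul_le_mul_of_nonneg_right (hbound s).1 (pow_nonneg (le_trans hx hs.1) _)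
  · rw [← e1 M]
    refine intervalIntegral.integral_mono_on hxy hint hM_int (fun s hs => ?_)
    exact mul_le_mul_of_nonneg_right (hbound s).2 (pow_nonneg (le_trans hx hs.1) _)

lemma key2 (n : ℕ) {a : ℝ → ℝ} (hcont : Continuous a) {m M : ℝ}
    (hbound : ∀ s : ℝ, m ≤ a s ∧ a s ≤ M) {x y : ℝ} (hx : x ≤ 0) (hyx : y ≤ x) :
    m * (y ^ (2*n+2) - x ^ (2*n+2)) / (2*(n:ℝ)+2) ≤ (∫ s in x..y, a s * s ^ (2*n+1)) ∧
    (∫ s in x..y, a s * s ^ (2*n+1)) ≤ M * (y ^ (2*n+2) - x ^ (2*n+2)) / (2*(n:ℝ)+2) := by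
  have hint : IntervalIntegrable (fun s => a s * s ^ (2*n+1)) volume y x :=
    (hcont.mul (continuous_pow _)).intervalIntegrable y x
  have hm_int : IntervalIntegrable (fun s : ℝ => m * s ^ (2*n+1)) volume y x :=
    (continuous_const.mul (continuous_pow _)).intervalIntegrable y x
  have hM_int : IntervalIntegrable (fun s : ℝ => M * s ^ (2*n+1)) volume y x :=
    (continuous_const.mul (continuous_pow _)).intervalIntegrable y x
  have e1 : ∀ c : ℝ, (∫ s in y..x, c * s ^ (2*n+1)) = c * (x ^ (2*n+2) - y ^ (2*n+2)) / (2*(n:ℝ)+2) := by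
    intro c
    rw [intervalIntegral.integral_const_mul, integral_pow]
    have h2 : 2*n+1+1 = 2*n+2 := rfl
    rw [h2]
    push_cast
    ring
  have hodd : Odd (2*n+1) := ⟨n, by ring⟩
  have hup : (∫ s in y..x, a s * s ^ (2*n+1)) ≤ m * (x ^ (2*n+2) - y ^ (2*n+2)) / (2*(n:ℝ)+2) := by
    rw [← e1 m]
    refine intervalIntegral.integral_mono_on hyx hint hm_int (fun s hs => ?_)
    exact mul_le_mul_of_nonpos_right (hbound s).1 (hodd.pow_nonpos (le_trans hs.2 hx))
  have hlo : M * (x ^ (2*n+2) - y ^ (2*n+2)) / (2*(n:ℝ)+2) ≤ ∫ s in y..x, a s * s ^ (2*n+1) := by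
    rw [← e1 M]
    refine intervalIntegral.integral_mono_on hyx hM_int hint (fun s hs => ?_)
    exact mul_le_mul_of_nonpos_right (hbound s).2 (hodd.pow_nonpos (le_trans hs.2 hx))
  rw [intervalIntegral.integral_symm y x]
  have e2 : ∀ c : ℝ, c * (y ^ (2*n+2) - x ^ (2*n+2)) / (2*(n:ℝ)+2)
      = -(c * (x ^ (2*n+2) - y ^ (2*n+2)) / (2*(n:ℝ)+2)) := fun c => by ring
  rw [e2 m, e2 M]
  constructor <;> linarith

lemma half_upper (F : ℝ → ℝ) (p B : ℝ) (hp : 0 < p)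
    (hmeas : Measurable F)
    (hFb : ∀ x ∈ Set.Icc (0:ℝ) p, |F x| ≤ B * (p - x) ^ (-(1/2) : ℝ)) :
    IntervalIntegrable F volume 0 p ∧
      (∫ x in (0:ℝ)..p, F x) ≤ B * (2 * p ^ ((1/2) : ℝ)) := by
  have hrpow : IntervalIntegrable (fun x : ℝ => (p - x) ^ (-(1/2):ℝ)) volume 0 p := by
    have := (intervalIntegrable_rpow' (by norm_num : (-1:ℝ) < -(1/2)) (a := 0) (b := p)).comp_sub_left p
    simpa using this.symm
  have hphi : IntervalIntegrable (fun x : ℝ => B * (p - x) ^ (-(1/2):ℝ)) volume 0 p :=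
    hrpow.const_mul B
  have hFint : IntervalIntegrable F volume 0 p := by
    refine hphi.mono_fun' hmeas.aestronglyMeasurable ?_
    refine ae_restrict_of_forall_mem measurableSet_uIoc (fun x hx => ?_)
    rw [Set.uIoc_of_le hp.le] at hx
    exact hFb x ⟨hx.1.le, hx.2⟩
  refine ⟨hFint, ?_⟩
  have h1 : (∫ x in (0:ℝ)..p, F x) ≤ ∫ x in (0:ℝ)..p, B * (p - x) ^ (-(1/2):ℝ) :=
    intervalIntegral.integral_mono_on hp.le hFint hphi
      (fun x hx => (le_abs_self _).trans (hFb x hx))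
  refine h1.trans (le_of_eq ?_)
  rw [intervalIntegral.integral_const_mul]
  have h2 : (∫ x in (0:ℝ)..p, (p - x) ^ (-(1/2):ℝ)) = ∫ x in (0:ℝ)..p, x ^ (-(1/2):ℝ) := by
    have := intervalIntegral.integral_comp_sub_left (a := 0) (b := p) (fun u : ℝ => u ^ (-(1/2):ℝ)) p
    simpa using this
  rw [h2, integral_rpow (Or.inl (by norm_num : (-1:ℝ) < -(1/2)))]
  rw [show (-(1/2) + 1 : ℝ) = 1/2 by norm_num, Real.zero_rpow (by norm_num : (1/2:ℝ) ≠ 0)]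
  ring

lemma ptbound (n : ℕ) {m P v t : ℝ} (hm : 0 < m) (hP : 0 < P)
    (ht : 0 ≤ t) (htP : t ≤ P)
    (hlow : m * (P ^ (2*n+2) - t ^ (2*n+2)) / (2*(n:ℝ)+2) ≤ v)
    (hend : t = P → v = 0) :
    |1 / Real.sqrt v| ≤ (Real.sqrt (m/(2*(n:ℝ)+2) * P^(2*n+1)))⁻¹ * (P - t) ^ (-(1/2):ℝ) := by
  have hK : (0:ℝ) < 2*(n:ℝ)+2 := by positivity
  rcases eq_or_lt_of_le htP with rfl|hlt
  · rw [hend rfl]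
    simp [Real.zero_rpow (by norm_num : (-(1/2):ℝ) ≠ 0)]
  · have hfac : P^(2*n+1) * (P - t) ≤ P^(2*n+2) - t^(2*n+2) := by
      have e1 : P ^ (2*n+2) = P^(2*n+1) * P := pow_succ P (2*n+1)
      have e2 : t ^ (2*n+2) = t^(2*n+1) * t := pow_succ t (2*n+1)
      have h3 : t^(2*n+1) ≤ P^(2*n+1) := pow_le_pow_left₀ ht hlt.le _
      nlinarith [mul_nonneg ht (sub_nonneg.2 h3)]
    have hmK : (0:ℝ) < m/(2*(n:ℝ)+2) := div_pos hm hK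
    have hc : (0:ℝ) < m/(2*(n:ℝ)+2) * P^(2*n+1) := mul_pos hmK (pow_pos hP _)
    have hv : m/(2*(n:ℝ)+2) * P^(2*n+1) * (P - t) ≤ v := by
      have h5 := mul_le_mul_of_nonneg_left hfac hmK.le
      calc m/(2*(n:ℝ)+2) * P^(2*n+1) * (P-t) = m/(2*(n:ℝ)+2) * (P^(2*n+1)*(P-t)) := by ring
        _ ≤ m/(2*(n:ℝ)+2) * (P^(2*n+2) - t^(2*n+2)) := h5
        _ = m * (P^(2*n+2) - t^(2*n+2))/(2*(n:ℝ)+2) := by ring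
        _ ≤ v := hlow
    have hs0 : 0 < Real.sqrt (m/(2*(n:ℝ)+2) * P^(2*n+1) * (P-t)) :=
      Real.sqrt_pos.2 (mul_pos hc (sub_pos.2 hlt))
    have h4 : 1 / Real.sqrt v ≤ 1 / Real.sqrt (m/(2*(n:ℝ)+2) * P^(2*n+1) * (P-t)) :=
      one_div_le_one_div_of_le hs0 (Real.sqrt_le_sqrt hv)
    rw [abs_of_nonneg (one_div_nonneg.2 (Real.sqrt_nonneg _))]
    refine h4.trans (le_of_eq ?_)
    rw [Real.sqrt_mul hc.le, one_div, mul_inv, Real.rpow_neg (sub_nonneg.2 htP),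
      Real.sqrt_eq_rpow, Real.sqrt_eq_rpow]

lemma half_conv (n : ℕ) {m M h P : ℝ} (hm : 0 < m) (hM : 0 < M) (hh : 0 < h)
    (hP : 0 < P) (hPk : (2*(n:ℝ)+2)*h/M ≤ P^(2*n+2)) :
    (Real.sqrt (m/(2*(n:ℝ)+2) * P^(2*n+1)))⁻¹ * (2 * P ^ ((1/2):ℝ))
      ≤ 2 * (Real.sqrt (m/(2*(n:ℝ)+2)))⁻¹ * ((2*(n:ℝ)+2)/M) ^ (-(1:ℝ)/2 + 1/(2*(n:ℝ)+2))
          * h ^ (-(1:ℝ)/2 + 1/(2*(n:ℝ)+2)) := by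
  have hK : (0:ℝ) < 2*(n:ℝ)+2 := by positivity
  set E : ℝ := -(1:ℝ)/2 + 1/(2*(n:ℝ)+2) with hEdef
  have hEneg : E ≤ 0 := by
    have h1 : 1/(2*(n:ℝ)+2) ≤ 1/2 := by
      apply one_div_le_one_div_of_le (by norm_num)
      have : (0:ℝ) ≤ n := n.cast_nonneg
      linarith
    rw [hEdef]; linarith
  have hmK : (0:ℝ) < m/(2*(n:ℝ)+2) := div_pos hm hK
  have e1 : (Real.sqrt (P^(2*n+1)))⁻¹ * P ^ ((1/2):ℝ) = (P^(2*n+2) : ℝ) ^ E := by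
    rw [← Real.rpow_natCast P (2*n+1), ← Real.rpow_natCast P (2*n+2), Real.sqrt_eq_rpow,
      ← Real.rpow_mul hP.le, ← Real.rpow_mul hP.le, ← Real.rpow_neg hP.le,
      ← Real.rpow_add hP]
    congr 1
    rw [hEdef]
    push_cast
    field_simp
    ring
  have e2 : (P^(2*n+2) : ℝ) ^ E ≤ ((2*(n:ℝ)+2)*h/M) ^ E :=
    Real.rpow_le_rpow_of_nonpos (div_pos (mul_pos hK hh) hM) hPk hEneg
  have e3 : ((2*(n:ℝ)+2)*h/M) ^ E = ((2*(n:ℝ)+2)/M) ^ E * h ^ E := by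
    rw [show (2*(n:ℝ)+2)*h/M = ((2*(n:ℝ)+2)/M)*h by ring,
      Real.mul_rpow (div_pos hK hM).le hh.le]
  have key : (Real.sqrt (P^(2*n+1)))⁻¹ * P ^ ((1/2):ℝ)
      ≤ ((2*(n:ℝ)+2)/M) ^ E * h ^ E := by rw [e1]; exact e2.trans_eq e3
  have hs : (0:ℝ) ≤ (Real.sqrt (m/(2*(n:ℝ)+2)))⁻¹ := inv_nonneg.2 (Real.sqrt_nonneg _)
  rw [Real.sqrt_mul hmK.le, mul_inv]
  calc (Real.sqrt (m/(2*(n:ℝ)+2)))⁻¹ * (Real.sqrt (P^(2*n+1)))⁻¹ * (2 * P ^ ((1/2):ℝ))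
      = 2 * (Real.sqrt (m/(2*(n:ℝ)+2)))⁻¹ * ((Real.sqrt (P^(2*n+1)))⁻¹ * P ^ ((1/2):ℝ)) := by ring
    _ ≤ 2 * (Real.sqrt (m/(2*(n:ℝ)+2)))⁻¹ * (((2*(n:ℝ)+2)/M) ^ E * h ^ E) := by
        apply mul_le_mul_of_nonneg_left key
        positivity
    _ = 2 * (Real.sqrt (m/(2*(n:ℝ)+2)))⁻¹ * ((2*(n:ℝ)+2)/M) ^ E * h ^ E := by ring

lemma root_le (n : ℕ) {M h P : ℝ} (hM : 0 < M) (hh : 0 < h) (hP : 0 < P)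
    (hPk : (2*(n:ℝ)+2)*h/M ≤ P^(2*n+2)) :
    ((2*(n:ℝ)+2)*h/M) ^ (1/(2*(n:ℝ)+2) : ℝ) ≤ P := by
  have hK : (0:ℝ) < 2*(n:ℝ)+2 := by positivity
  have h1 := Real.rpow_le_rpow (div_pos (mul_pos hK hh) hM).le hPk
    (by positivity : (0:ℝ) ≤ 1/(2*(n:ℝ)+2))
  refine h1.trans (le_of_eq ?_)
  rw [← Real.rpow_natCast P (2*n+2), ← Real.rpow_mul hP.le]
  rw [show ((2*n+2 : ℕ) : ℝ) * (1/(2*(n:ℝ)+2)) = 1 by push_cast; field_simp]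
  exact Real.rpow_one P

lemma low_conv (n : ℕ) {M h : ℝ} (hM : 0 < M) (hh : 0 < h) :
    ((2*(n:ℝ)+2)*h/M) ^ (1/(2*(n:ℝ)+2) : ℝ) / 2 * (Real.sqrt h)⁻¹
      = ((2*(n:ℝ)+2)/M) ^ (1/(2*(n:ℝ)+2) : ℝ) / 2 * h ^ (-(1:ℝ)/2 + 1/(2*(n:ℝ)+2)) := by
  have hK : (0:ℝ) < 2*(n:ℝ)+2 := by positivity
  rw [show (2*(n:ℝ)+2)*h/M = ((2*(n:ℝ)+2)/M)*h by ring,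
    Real.mul_rpow (div_pos hK hM).le hh.le,
    Real.sqrt_eq_rpow, ← Real.rpow_neg hh.le,
    show (-(1:ℝ)/2 + 1/(2*(n:ℝ)+2)) = 1/(2*(n:ℝ)+2) + -(1/2) by ring,
    Real.rpow_add hh]
  ring

theorem stmt_8 (n : ℕ) (hn : 1 ≤ n) (a : ℝ → ℝ) (hcont : Continuous a)
    (m M : ℝ) (hm : 0 < m) (hmM : m ≤ M)
    (hbound : ∀ s : ℝ, m ≤ a s ∧ a s ≤ M)
    (G : ℝ → ℝ) (hG : ∀ x : ℝ, G x = ∫ s in (0:ℝ)..x, a s * s ^ (2 * n + 1))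
    (xp xm : ℝ → ℝ)
    (hxp : ∀ h : ℝ, 0 < h → 0 < xp h ∧ G (xp h) = h)
    (hxm : ∀ h : ℝ, 0 < h → xm h < 0 ∧ G (xm h) = h)
    (I' : ℝ → ℝ)
    (hI' : ∀ h : ℝ, 0 < h →
      I' h = Real.sqrt 2 * ∫ x in (xm h)..(xp h), 1 / Real.sqrt (h - G x)) :
    ∃ c₁ > (0:ℝ), ∃ c₂ > (0:ℝ), ∃ h₀ > (0:ℝ), ∀ h : ℝ, h₀ ≤ h →
      c₁ * h ^ (-(1:ℝ) / 2 + 1 / (2 * n + 2)) ≤ I' h ∧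
      I' h ≤ c₂ * h ^ (-(1:ℝ) / 2 + 1 / (2 * n + 2)) := by
  have hM : 0 < M := lt_of_lt_of_le hm hmM
  have hKpos : (0:ℝ) < 2*(n:ℝ)+2 := by positivity
  refine ⟨Real.sqrt 2 * (((2*(n:ℝ)+2)/M) ^ (1/(2*(n:ℝ)+2) : ℝ) / 2),
    mul_pos (Real.sqrt_pos.2 two_pos)
      (div_pos (Real.rpow_pos_of_pos (div_pos hKpos hM) _) two_pos),
    Real.sqrt 2 * (2 * (2 * (Real.sqrt (m/(2*(n:ℝ)+2)))⁻¹
      * ((2*(n:ℝ)+2)/M) ^ (-(1:ℝ)/2 + 1/(2*(n:ℝ)+2)))),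
    mul_pos (Real.sqrt_pos.2 two_pos)
      (mul_pos two_pos (mul_pos
        (mul_pos two_pos (inv_pos.2 (Real.sqrt_pos.2 (div_pos hm hKpos))))
        (Real.rpow_pos_of_pos (div_pos hKpos hM) _))),
    1, one_pos, ?_⟩
  intro h hh1
  have hh : 0 < h := lt_of_lt_of_le one_pos hh1
  obtain ⟨hp, hGp⟩ := hxp h hh
  obtain ⟨hq, hGq⟩ := hxm h hh
  -- continuity and measurability
  have hGc : Continuous G := by
    have hGfun : G = fun x => ∫ s in (0:ℝ)..x, a s * s ^ (2*n+1) := funext hG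
    rw [hGfun]
    exact intervalIntegral.continuous_primitive
      (fun u v => (hcont.mul (continuous_pow _)).intervalIntegrable u v) 0
  set g : ℝ → ℝ := fun x => 1 / Real.sqrt (h - G x) with hgdef
  have hgmeas : Measurable g := by
    rw [hgdef]
    simp only [one_div]
    exact ((Real.continuous_sqrt.comp (continuous_const.sub hGc)).measurable).inv
  have hgnn : ∀ x, 0 ≤ g x := fun x => one_div_nonneg.2 (Real.sqrt_nonneg _)
  have hfint : ∀ u v : ℝ, IntervalIntegrable (fun s => a s * s ^ (2*n+1)) volume u v :=
    fun u v => (hcont.mul (continuous_pow _)).intervalIntegrable u v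
  have hGdiff : ∀ u v : ℝ, G v - G u = ∫ s in u..v, a s * s ^ (2*n+1) := by
    intro u v; rw [hG, hG]
    exact intervalIntegral.integral_interval_sub_left (hfint 0 v) (hfint 0 u)
  have hG0 : G 0 = 0 := by rw [hG]; simp
  have F1 : ∀ x : ℝ, 0 ≤ x → x ≤ xp h →
      m * ((xp h) ^ (2*n+2) - x ^ (2*n+2)) / (2*(n:ℝ)+2) ≤ h - G x ∧
      h - G x ≤ M * ((xp h) ^ (2*n+2) - x ^ (2*n+2)) / (2*(n:ℝ)+2) := by
    intro x h0 hxle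
    have hdx : h - G x = ∫ s in x..(xp h), a s * s ^ (2*n+1) := by
      rw [← hGdiff x (xp h), hGp]
    rw [hdx]
    exact key1 n hcont hbound h0 hxle
  have F2 : ∀ x : ℝ, xm h ≤ x → x ≤ 0 →
      m * ((xm h) ^ (2*n+2) - x ^ (2*n+2)) / (2*(n:ℝ)+2) ≤ h - G x ∧
      h - G x ≤ M * ((xm h) ^ (2*n+2) - x ^ (2*n+2)) / (2*(n:ℝ)+2) := by
    intro x hqx hx0
    have hdx : h - G x = ∫ s in x..(xm h), a s * s ^ (2*n+1) := by
      rw [← hGdiff x (xm h), hGq]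
    rw [hdx]
    exact key2 n hcont hbound hx0 hqx
  -- h versus p^k and q^k
  have h0k : (0:ℝ)^(2*n+2) = 0 := zero_pow (by omega)
  have hpk : h ≤ M * (xp h) ^ (2*n+2) / (2*(n:ℝ)+2) := by
    have := (F1 0 le_rfl hp.le).2
    rw [hG0, h0k] at this
    simpa using this
  have hqk : h ≤ M * (xm h) ^ (2*n+2) / (2*(n:ℝ)+2) := by
    have := (F2 0 hq.le le_rfl).2
    rw [hG0, h0k] at this
    simpa using this
  have hPk : (2*(n:ℝ)+2)*h/M ≤ (xp h)^(2*n+2) := by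
    rw [div_le_iff₀ hM]
    have e : (2*(n:ℝ)+2) * (M*(xp h)^(2*n+2)/(2*(n:ℝ)+2)) = M*(xp h)^(2*n+2) := by
      field_simp
    nlinarith [mul_le_mul_of_nonneg_left hpk hKpos.le]
  set r : ℝ := -(xm h) with hrdef
  have hr : 0 < r := by rw [hrdef]; linarith
  have hqeq : (xm h)^(2*n+2) = r^(2*n+2) := by
    rw [show xm h = -r by rw [hrdef]; ring]
    exact Even.neg_pow ⟨n+1, by ring⟩ r
  have hRk : (2*(n:ℝ)+2)*h/M ≤ r^(2*n+2) := by
    rw [div_le_iff₀ hM]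
    have e : (2*(n:ℝ)+2) * (M*(xm h)^(2*n+2)/(2*(n:ℝ)+2)) = M*(xm h)^(2*n+2) := by
      field_simp
    nlinarith [mul_le_mul_of_nonneg_left hqk hKpos.le, hqeq]
  -- positive half
  have hbp : ∀ x ∈ Set.Icc (0:ℝ) (xp h), |g x| ≤
      (Real.sqrt (m/(2*(n:ℝ)+2) * (xp h)^(2*n+1)))⁻¹ * ((xp h) - x) ^ (-(1/2):ℝ) := by
    intro x hx
    exact ptbound n hm hp hx.1 hx.2 (F1 x hx.1 hx.2).1
      (fun hxp' => by rw [hxp', hGp, sub_self])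
  obtain ⟨hint_p, hup_p⟩ := half_upper g (xp h) _ hp hgmeas hbp
  -- negative half (reflected)
  have hgmeasneg : Measurable (fun u : ℝ => g (-u)) := hgmeas.comp measurable_neg
  have hbq : ∀ u ∈ Set.Icc (0:ℝ) r, |g (-u)| ≤
      (Real.sqrt (m/(2*(n:ℝ)+2) * r^(2*n+1)))⁻¹ * (r - u) ^ (-(1/2):ℝ) := by
    intro u hu
    have hnu1 : xm h ≤ -u := by rw [hrdef] at hu; linarith [hu.2]
    have hnu2 : -u ≤ 0 := by linarith [hu.1]
    have hlow := (F2 (-u) hnu1 hnu2).1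
    have hueq : (-u:ℝ)^(2*n+2) = u^(2*n+2) := Even.neg_pow ⟨n+1, by ring⟩ u
    rw [hqeq, hueq] at hlow
    exact ptbound n hm hr hu.1 hu.2 hlow
      (fun hur => by rw [show -u = xm h by rw [hur, hrdef]; ring, hGq, sub_self])
  obtain ⟨hint_n', hup_n⟩ := half_upper (fun u => g (-u)) r _ hr hgmeasneg hbq
  have hint_q0 : IntervalIntegrable g volume (xm h) 0 := by
    have h1 := (IntervalIntegrable.iff_comp_neg (f := fun u => g (-u))).mp hint_n'
    simp only [neg_neg, neg_zero] at h1
    rw [hrdef] at h1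
    simp only [neg_neg] at h1
    exact h1.symm
  have heq_n : (∫ x in (xm h)..(0:ℝ), g x) = ∫ u in (0:ℝ)..r, g (-u) := by
    rw [intervalIntegral.integral_comp_neg (fun u => g u)]
    rw [hrdef]
    norm_num
  have hsplit : (∫ x in (xm h)..(xp h), g x)
      = (∫ x in (xm h)..0, g x) + ∫ x in (0:ℝ)..(xp h), g x :=
    (intervalIntegral.integral_add_adjacent_intervals hint_q0 hint_p).symm
  -- lower bound
  have hlow_half : (xp h)/2 * (Real.sqrt h)⁻¹ ≤ ∫ x in (0:ℝ)..(xp h), g x := by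
    have i1 : IntervalIntegrable g volume 0 ((xp h)/2) := by
      apply hint_p.mono_set
      rw [Set.uIcc_of_le (by linarith : (0:ℝ) ≤ xp h/2), Set.uIcc_of_le hp.le]
      exact Set.Icc_subset_Icc le_rfl (by linarith)
    have i2 : IntervalIntegrable g volume ((xp h)/2) (xp h) := by
      apply hint_p.mono_set
      rw [Set.uIcc_of_le (by linarith : xp h/2 ≤ xp h), Set.uIcc_of_le hp.le]
      exact Set.Icc_subset_Icc (by linarith) le_rfl
    have hsum : (∫ x in (0:ℝ)..(xp h), g x)
        = (∫ x in (0:ℝ)..((xp h)/2), g x) + ∫ x in ((xp h)/2)..(xp h), g x :=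
      (intervalIntegral.integral_add_adjacent_intervals i1 i2).symm
    have hc : ∀ x ∈ Set.Icc (0:ℝ) ((xp h)/2), (Real.sqrt h)⁻¹ ≤ g x := by
      intro x hx
      have hxp2 : x ≤ xp h := by linarith [hx.2]
      have hGx0 : 0 ≤ G x := by
        have hk := (key1 n hcont hbound le_rfl hx.1 (a := a) (m := m) (M := M)).1
        rw [← hGdiff 0 x, hG0, sub_zero] at hk
        rw [h0k] at hk
        have : 0 ≤ m * (x ^ (2*n+2) - 0) / (2*(n:ℝ)+2) :=
          div_nonneg (mul_nonneg hm.le (by simpa using pow_nonneg hx.1 (2*n+2))) hKpos.le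
        linarith
      have hxk : x^(2*n+2) < (xp h)^(2*n+2) := by
        have h1 : x^(2*n+2) ≤ (xp h/2)^(2*n+2) := pow_le_pow_left₀ hx.1 hx.2 _
        have h2 : (xp h/2)^(2*n+2) < (xp h)^(2*n+2) :=
          pow_lt_pow_left₀ (by linarith) (by linarith) (by omega)
        linarith
      have hpos : 0 < h - G x := by
        have h3 : 0 < m * ((xp h)^(2*n+2) - x^(2*n+2)) / (2*(n:ℝ)+2) :=
          div_pos (mul_pos hm (sub_pos.2 hxk)) hKpos
        linarith [(F1 x hx.1 hxp2).1]
      have h5 := one_div_le_one_div_of_le (Real.sqrt_pos.2 hpos)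
        (Real.sqrt_le_sqrt (by linarith : h - G x ≤ h))
      rw [hgdef]
      simpa [one_div] using h5
    have t1 : (xp h)/2 * (Real.sqrt h)⁻¹ ≤ ∫ x in (0:ℝ)..((xp h)/2), g x := by
      have := intervalIntegral.integral_mono_on (by linarith : (0:ℝ) ≤ xp h/2)
        (_root_.intervalIntegrable_const (c := (Real.sqrt h)⁻¹)) i1 hc
      simpa [intervalIntegral.integral_const, smul_eq_mul] using this
    have t2 : 0 ≤ ∫ x in ((xp h)/2)..(xp h), g x :=
      intervalIntegral.integral_nonneg (by linarith) (fun u _ => hgnn u)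
    linarith
  have hlow_q : 0 ≤ ∫ x in (xm h)..(0:ℝ), g x :=
    intervalIntegral.integral_nonneg hq.le (fun u _ => hgnn u)
  have hproot : ((2*(n:ℝ)+2)*h/M) ^ (1/(2*(n:ℝ)+2):ℝ) ≤ xp h := root_le n hM hh hp hPk
  -- assemble
  have hIeq : I' h = Real.sqrt 2 * ∫ x in (xm h)..(xp h), g x := hI' h hh
  have hEexp : (-(1:ℝ) / 2 + 1 / (2 * (n:ℝ) + 2)) = (-(1:ℝ)/2 + 1/(2*(n:ℝ)+2)) := rfl
  constructor
  · -- lower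
    have s1 : ((2*(n:ℝ)+2)/M) ^ (1/(2*(n:ℝ)+2):ℝ)/2 * h ^ (-(1:ℝ)/2 + 1/(2*(n:ℝ)+2))
        ≤ ∫ x in (xm h)..(xp h), g x := by
      rw [← low_conv n hM hh]
      have h6 : ((2*(n:ℝ)+2)*h/M) ^ (1/(2*(n:ℝ)+2):ℝ)/2 * (Real.sqrt h)⁻¹
          ≤ (xp h)/2 * (Real.sqrt h)⁻¹ := by
        apply mul_le_mul_of_nonneg_right (by linarith) (inv_nonneg.2 (Real.sqrt_nonneg _))
      rw [hsplit]
      linarith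
    calc Real.sqrt 2 * (((2*(n:ℝ)+2)/M) ^ (1/(2*(n:ℝ)+2):ℝ)/2) * h ^ (-(1:ℝ)/2 + 1/(2*(n:ℝ)+2))
        = Real.sqrt 2 * (((2*(n:ℝ)+2)/M) ^ (1/(2*(n:ℝ)+2):ℝ)/2 * h ^ (-(1:ℝ)/2 + 1/(2*(n:ℝ)+2))) := by
          ring
      _ ≤ Real.sqrt 2 * ∫ x in (xm h)..(xp h), g x :=
          mul_le_mul_of_nonneg_left s1 (Real.sqrt_nonneg 2)
      _ = I' h := hIeq.symm
  · -- upper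
    have u1 : (∫ x in (0:ℝ)..(xp h), g x)
        ≤ 2 * (Real.sqrt (m/(2*(n:ℝ)+2)))⁻¹ * ((2*(n:ℝ)+2)/M) ^ (-(1:ℝ)/2 + 1/(2*(n:ℝ)+2))
            * h ^ (-(1:ℝ)/2 + 1/(2*(n:ℝ)+2)) :=
      hup_p.trans (half_conv n hm hM hh hp hPk)
    have u2 : (∫ x in (xm h)..(0:ℝ), g x)
        ≤ 2 * (Real.sqrt (m/(2*(n:ℝ)+2)))⁻¹ * ((2*(n:ℝ)+2)/M) ^ (-(1:ℝ)/2 + 1/(2*(n:ℝ)+2))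
            * h ^ (-(1:ℝ)/2 + 1/(2*(n:ℝ)+2)) := by
      rw [heq_n]
      exact hup_n.trans (half_conv n hm hM hh hr hRk)
    have stot : (∫ x in (xm h)..(xp h), g x)
        ≤ 2 * (2 * (Real.sqrt (m/(2*(n:ℝ)+2)))⁻¹ * ((2*(n:ℝ)+2)/M) ^ (-(1:ℝ)/2 + 1/(2*(n:ℝ)+2)))
            * h ^ (-(1:ℝ)/2 + 1/(2*(n:ℝ)+2)) := by
      rw [hsplit]; linarith
    calc I' h = Real.sqrt 2 * ∫ x in (xm h)..(xp h), g x := hIeq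
      _ ≤ Real.sqrt 2 * (2 * (2 * (Real.sqrt (m/(2*(n:ℝ)+2)))⁻¹
            * ((2*(n:ℝ)+2)/M) ^ (-(1:ℝ)/2 + 1/(2*(n:ℝ)+2)))
            * h ^ (-(1:ℝ)/2 + 1/(2*(n:ℝ)+2))) :=
          mul_le_mul_of_nonneg_left stot (Real.sqrt_nonneg 2)
      _ = Real.sqrt 2 * (2 * (2 * (Real.sqrt (m/(2*(n:ℝ)+2)))⁻¹
            * ((2*(n:ℝ)+2)/M) ^ (-(1:ℝ)/2 + 1/(2*(n:ℝ)+2))))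
            * h ^ (-(1:ℝ)/2 + 1/(2*(n:ℝ)+2)) := by ring
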